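/- Let K = ∫_{-1}^{1} exp(1/(t² − 1)) dt and define w_e : ℝ → ℝ by w_e(t) = exp(1/(t² − 1)) for |t| < 1 and w_e(t) = 0 for |t| ≥ 1. Then for every n ≥ 1, every n times continuously differentiable f : ℝ → ℝ, and every x₀ ∈ ℝ, the limit as h → 0⁺ of (−1/h)ⁿ · (1/K) · ∫_{-1}^{1} w_e⁽ⁿ⁾(t) f(x₀ + h t) dt exists and equals f⁽ⁿ⁾(x₀). -/

import Mathlib

open Filter Topology intervalIntegral

/-- If a smooth function vanishes on `Ici a`, so do all its iterated derivatives. -/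
lemma iteratedDeriv_zero_on_Ici {g : ℝ → ℝ} (hg : ContDiff ℝ (⊤ : ℕ∞) g) (a : ℝ)
    (h0 : ∀ x ∈ Set.Ici a, g x = 0) :
    ∀ n : ℕ, ∀ x ∈ Set.Ici a, iteratedDeriv n g x = 0 := by
  intro n
  induction n with
  | zero => simpa using h0
  | succ n ih =>
    intro x hx
    have hdiff : Differentiable ℝ (iteratedDeriv n g) :=
      hg.differentiable_iteratedDeriv n (by exact_mod_cast ENat.coe_lt_top n)
    rw [iteratedDeriv_succ]
    have hxa : a ≤ x := hx
    have h1 : HasDerivWithinAt (iteratedDeriv n g) 0 (Set.Ici x) x := by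
      refine (hasDerivWithinAt_const x _ (0 : ℝ)).congr ?_ ?_
      · intro y hy; exact ih y (le_trans hxa hy)
      · exact ih x hx
    have h2 : HasDerivWithinAt (iteratedDeriv n g) (deriv (iteratedDeriv n g) x)
        (Set.Ici x) x := ((hdiff x).hasDerivAt).hasDerivWithinAt
    have e1 := h1.derivWithin (uniqueDiffOn_Ici x x Set.self_mem_Ici)
    have e2 := h2.derivWithin (uniqueDiffOn_Ici x x Set.self_mem_Ici)
    rw [← e2]; exact e1

/-- If a smooth function vanishes on `Iic a`, so do all its iterated derivatives. -/
lemma iteratedDeriv_zero_on_Iic {g : ℝ → ℝ} (hg : ContDiff ℝ (⊤ : ℕ∞) g) (a : ℝ)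
    (h0 : ∀ x ∈ Set.Iic a, g x = 0) :
    ∀ n : ℕ, ∀ x ∈ Set.Iic a, iteratedDeriv n g x = 0 := by
  intro n
  induction n with
  | zero => simpa using h0
  | succ n ih =>
    intro x hx
    have hdiff : Differentiable ℝ (iteratedDeriv n g) :=
      hg.differentiable_iteratedDeriv n (by exact_mod_cast ENat.coe_lt_top n)
    rw [iteratedDeriv_succ]
    have hxa : x ≤ a := hx
    have h1 : HasDerivWithinAt (iteratedDeriv n g) 0 (Set.Iic x) x := by
      refine (hasDerivWithinAt_const x _ (0 : ℝ)).congr ?_ ?_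
      · intro y hy; exact ih y (le_trans hy hxa)
      · exact ih x hx
    have h2 : HasDerivWithinAt (iteratedDeriv n g) (deriv (iteratedDeriv n g) x)
        (Set.Iic x) x := ((hdiff x).hasDerivAt).hasDerivWithinAt
    have e1 := h1.derivWithin (uniqueDiffOn_Iic x x Set.self_mem_Iic)
    have e2 := h2.derivWithin (uniqueDiffOn_Iic x x Set.self_mem_Iic)
    rw [← e2]; exact e1

/-- The normalized bump function `w_e/K` is a universal weight for differentiation by
integration: for every `n ≥ 1`, every n-times continuously differentiable `f`, and every `x₀`,
`(−1/h)ⁿ (1/K) ∫_{-1}^{1} w_e⁽ⁿ⁾(t) f(x₀+ht) dt → f⁽ⁿ⁾(x₀)` as `h → 0⁺`,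
where `K = ∫_{-1}^{1} exp(1/(t²−1)) dt`. -/
theorem bump_weight_nth_derivative (w_e : ℝ → ℝ) (K : ℝ)
    (hK : K = ∫ t in (-1 : ℝ)..1, Real.exp (1 / (t ^ 2 - 1)))
    (hdef₁ : ∀ t : ℝ, |t| < 1 → w_e t = Real.exp (1 / (t ^ 2 - 1)))
    (hdef₂ : ∀ t : ℝ, 1 ≤ |t| → w_e t = 0) :
    ∀ n : ℕ, 1 ≤ n → ∀ f : ℝ → ℝ, ContDiff ℝ (n : ℕ∞) f → ∀ x₀ : ℝ,
      Tendsto (fun h : ℝ => (-1 / h) ^ n * (1 / K) *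
          ∫ t in (-1 : ℝ)..1, iteratedDeriv n w_e t * f (x₀ + h * t))
        (𝓝[>] (0 : ℝ)) (𝓝 (iteratedDeriv n f x₀)) := by
  intro n hn f hf x₀
  -- identify w_e with a composition of expNegInvGlue
  have hwe : ∀ t : ℝ, w_e t = expNegInvGlue (1 - t ^ 2) := by
    intro t
    rcases lt_or_ge (|t|) 1 with h | h
    · have ht2 : t ^ 2 < 1 := by nlinarith [sq_abs t, abs_nonneg t]
      rw [hdef₁ t h]
      unfold expNegInvGlue
      rw [if_neg (by linarith)]
      congr 1
      rw [one_div, show t ^ 2 - 1 = -(1 - t ^ 2) by ring, inv_neg]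
    · have ht2 : 1 ≤ t ^ 2 := by nlinarith [sq_abs t, abs_nonneg t]
      rw [hdef₂ t h, expNegInvGlue.zero_of_nonpos (by linarith)]
  have hwee : w_e = fun t => expNegInvGlue (1 - t ^ 2) := funext hwe
  have hsmooth : ContDiff ℝ (⊤ : ℕ∞) w_e := by
    rw [hwee]
    exact expNegInvGlue.contDiff.comp (contDiff_const.sub (contDiff_id.pow 2))
  -- all iterated derivatives of w_e vanish at ±1
  have hvan1 : ∀ m : ℕ, iteratedDeriv m w_e 1 = 0 := fun m =>
    iteratedDeriv_zero_on_Ici hsmooth 1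
      (fun x hx => hdef₂ x (le_abs.mpr (Or.inl hx))) m 1 Set.self_mem_Ici
  have hvan2 : ∀ m : ℕ, iteratedDeriv m w_e (-1) = 0 := fun m =>
    iteratedDeriv_zero_on_Iic hsmooth (-1)
      (fun x hx => hdef₂ x (by
        rw [le_abs]; right
        simp only [Set.mem_Iic] at hx
        linarith)) m (-1) Set.self_mem_Iic
  -- integration by parts, n times
  have key : ∀ h : ℝ, ∀ k : ℕ, k ≤ n →
      (∫ t in (-1 : ℝ)..1, iteratedDeriv n w_e t * f (x₀ + h * t)) =
        (-h) ^ k * ∫ t in (-1 : ℝ)..1,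
          iteratedDeriv (n - k) w_e t * iteratedDeriv k f (x₀ + h * t) := by
    intro h k
    induction k with
    | zero => intro _; simp
    | succ k ih =>
      intro hk
      have hkn : k < n := hk
      rw [ih hkn.le]
      have hnk : n - k = (n - (k + 1)) + 1 := by omega
      set m := n - (k + 1) with hm
      have hDf : Differentiable ℝ (iteratedDeriv k f) :=
        hf.differentiable_iteratedDeriv k (by exact_mod_cast hkn)
      have hderiv : iteratedDeriv (n - k) w_e = deriv (iteratedDeriv m w_e) := by
        rw [hnk]; exact iteratedDeriv_succ
      have hu : ∀ x ∈ Set.uIcc (-1 : ℝ) 1,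
          HasDerivAt (iteratedDeriv m w_e) (iteratedDeriv (n - k) w_e x) x := by
        intro x _
        have hd : Differentiable ℝ (iteratedDeriv m w_e) :=
          hsmooth.differentiable_iteratedDeriv m (by exact_mod_cast ENat.coe_lt_top m)
        rw [hderiv]
        exact (hd x).hasDerivAt
      have hv : ∀ x ∈ Set.uIcc (-1 : ℝ) 1,
          HasDerivAt (fun t => iteratedDeriv k f (x₀ + h * t))
            (iteratedDeriv (k + 1) f (x₀ + h * x) * h) x := by
        intro x _
        have hφ : HasDerivAt (fun t : ℝ => x₀ + h * t) h x := by
          simpa using ((hasDerivAt_id x).const_mul h).const_add x₀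
        have hg : HasDerivAt (iteratedDeriv k f) (iteratedDeriv (k + 1) f (x₀ + h * x))
            (x₀ + h * x) := by
          have := (hDf (x₀ + h * x)).hasDerivAt
          rwa [← iteratedDeriv_succ] at this
        exact hg.comp x hφ
      have hu' : IntervalIntegrable (fun x => iteratedDeriv (n - k) w_e x)
          MeasureTheory.volume (-1) 1 :=
        (hsmooth.continuous_iteratedDeriv (n - k)
          (le_of_lt (WithTop.coe_lt_coe.mpr (ENat.coe_lt_top (n - k))))).intervalIntegrable _ _
      have hv' : IntervalIntegrable
          (fun x => iteratedDeriv (k + 1) f (x₀ + h * x) * h) MeasureTheory.volume (-1) 1 := by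
        apply Continuous.intervalIntegrable
        exact ((hf.continuous_iteratedDeriv (k + 1) (by exact_mod_cast hk)).comp
          (continuous_const.add (continuous_const.mul continuous_id))).mul continuous_const
      have ibp := intervalIntegral.integral_mul_deriv_eq_deriv_mul hu hv hu' hv'
      rw [hvan1 m, hvan2 m, zero_mul, zero_mul, sub_zero, zero_sub] at ibp
      have e1 : (∫ t in (-1 : ℝ)..1,
            iteratedDeriv (n - k) w_e t * iteratedDeriv k f (x₀ + h * t))
          = -∫ t in (-1 : ℝ)..1,
              iteratedDeriv m w_e t * (iteratedDeriv (k + 1) f (x₀ + h * t) * h) := by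
        rw [ibp, neg_neg]
      rw [e1]
      have e2 : (∫ t in (-1 : ℝ)..1,
            iteratedDeriv m w_e t * (iteratedDeriv (k + 1) f (x₀ + h * t) * h))
          = h * ∫ t in (-1 : ℝ)..1,
              iteratedDeriv m w_e t * iteratedDeriv (k + 1) f (x₀ + h * t) := by
        rw [← intervalIntegral.integral_const_mul]
        congr 1; funext t; ring
      rw [e2]; ring
  -- the limit function
  set F := iteratedDeriv n f with hF
  have hFc : Continuous F := hf.continuous_iteratedDeriv n le_rfl
  have hwec : Continuous w_e := hsmooth.continuous
  have hwe_nonneg : ∀ t, 0 ≤ w_e t := fun t => by rw [hwe]; exact expNegInvGlue.nonneg _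
  have hwe_le_one : ∀ t, w_e t ≤ 1 := by
    intro t
    rw [hwe]
    unfold expNegInvGlue
    split
    · norm_num
    · rename_i hcond
      have hcond' : (0:ℝ) < 1 - t ^ 2 := lt_of_not_ge hcond
      calc Real.exp (-(1 - t ^ 2)⁻¹) ≤ Real.exp 0 :=
            Real.exp_le_exp.mpr (neg_nonpos.mpr (inv_nonneg.mpr hcond'.le))
        _ = 1 := Real.exp_zero
  -- K = ∫ w_e and K > 0
  have hKe : K = ∫ t in (-1 : ℝ)..1, w_e t := by
    rw [hK]
    apply intervalIntegral.integral_congr_ae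
    have hmeas : ∀ᵐ x : ℝ ∂MeasureTheory.volume, x ≠ 1 := by
      rw [MeasureTheory.ae_iff]
      have : {x : ℝ | ¬x ≠ 1} = {1} := by ext x; simp
      rw [this]
      exact MeasureTheory.measure_singleton 1
    filter_upwards [hmeas] with x hx1 hx
    rw [Set.uIoc_of_le (by norm_num : (-1:ℝ) ≤ 1)] at hx
    have habs : |x| < 1 := abs_lt.mpr ⟨hx.1, lt_of_le_of_ne hx.2 hx1⟩
    exact (hdef₁ x habs).symm
  have hKpos : 0 < K := by
    rw [hKe]
    apply intervalIntegral.intervalIntegral_pos_of_pos_on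
    · exact hwec.intervalIntegrable _ _
    · intro x hx
      rw [hwe]
      apply expNegInvGlue.pos_of_pos
      nlinarith [hx.1, hx.2]
    · norm_num
  have hKne : K ≠ 0 := ne_of_gt hKpos
  -- the main limit via dominated convergence
  obtain ⟨M, hM⟩ : ∃ M : ℝ, ∀ y ∈ Set.Icc (x₀ - 1) (x₀ + 1), |F y| ≤ M := by
    obtain ⟨M, hM⟩ := (isCompact_Icc (a := x₀ - 1) (b := x₀ + 1)).exists_bound_of_continuousOn
      hFc.continuousOn
    exact ⟨M, fun y hy => by simpa using hM y hy⟩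
  have hlim : Tendsto (fun h : ℝ => ∫ t in (-1 : ℝ)..1, w_e t * F (x₀ + h * t))
      (𝓝[>] (0 : ℝ)) (𝓝 (∫ t in (-1 : ℝ)..1, w_e t * F x₀)) := by
    apply intervalIntegral.tendsto_integral_filter_of_dominated_convergence (fun _ => M)
    · filter_upwards with h
      exact ((hwec.mul (hFc.comp (continuous_const.add
        (continuous_const.mul continuous_id)))).aestronglyMeasurable).restrict
    · have hIoc : Set.Ioc (0:ℝ) 1 ∈ 𝓝[>] (0:ℝ) :=
        mem_nhdsWithin.mpr ⟨Set.Iio 1, isOpen_Iio, Set.mem_Iio.mpr one_pos,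
          fun x hx => ⟨hx.2, le_of_lt hx.1⟩⟩
      filter_upwards [hIoc] with h hh
      filter_upwards with t ht
      rw [Set.uIoc_of_le (by norm_num : (-1:ℝ) ≤ 1)] at ht
      have harg : x₀ + h * t ∈ Set.Icc (x₀ - 1) (x₀ + 1) := by
        constructor
        · nlinarith [ht.1, ht.2, hh.1, hh.2]
        · nlinarith [ht.1, ht.2, hh.1, hh.2]
      have hMt := hM _ harg
      calc ‖w_e t * F (x₀ + h * t)‖ = w_e t * |F (x₀ + h * t)| := by
            rw [norm_mul, Real.norm_eq_abs, Real.norm_eq_abs, abs_of_nonneg (hwe_nonneg t)]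
        _ ≤ 1 * M := mul_le_mul (hwe_le_one t) hMt (abs_nonneg _) one_pos.le
        _ = M := one_mul M
    · exact intervalIntegrable_const
    · filter_upwards with t _
      have hc : Continuous (fun h : ℝ => w_e t * F (x₀ + h * t)) :=
        continuous_const.mul (hFc.comp (continuous_const.add (continuous_mul_right t)))
      have h0 : Tendsto (fun h : ℝ => w_e t * F (x₀ + h * t)) (𝓝 0)
          (𝓝 (w_e t * F (x₀ + 0 * t))) := hc.tendsto 0
      simp only [zero_mul, add_zero] at h0
      exact h0.mono_left nhdsWithin_le_nhds
  have hval : (∫ t in (-1 : ℝ)..1, w_e t * F x₀) = K * F x₀ := by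
    rw [intervalIntegral.integral_mul_const, ← hKe]
  rw [hval] at hlim
  -- put everything together
  have haux : ∀ (A B I : ℝ), A * B = 1 → A * (1 / K) * (B * I) = (1 / K) * I := by
    intro A B I hAB
    calc A * (1 / K) * (B * I) = (A * B) * ((1 / K) * I) := by ring
      _ = 1 * ((1 / K) * I) := by rw [hAB]
      _ = (1 / K) * I := one_mul _
  have heq : ∀ᶠ h : ℝ in 𝓝[>] (0:ℝ),
      (1 / K) * (∫ t in (-1 : ℝ)..1, w_e t * F (x₀ + h * t)) =
      (-1 / h) ^ n * (1 / K) *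
        ∫ t in (-1 : ℝ)..1, iteratedDeriv n w_e t * f (x₀ + h * t) := by
    filter_upwards [self_mem_nhdsWithin] with h hh
    have hne : h ≠ 0 := ne_of_gt hh
    rw [key h n le_rfl]
    rw [Nat.sub_self n, iteratedDeriv_zero, ← hF]
    have hpow : (-1 / h) ^ n * (-h) ^ n = 1 := by
      rw [← mul_pow, show (-1 / h) * (-h) = 1 by field_simp]
      exact one_pow n
    exact (haux _ _ _ hpow).symm
  have hfinal : Tendsto (fun h : ℝ =>
      (1 / K) * (∫ t in (-1 : ℝ)..1, w_e t * F (x₀ + h * t)))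
      (𝓝[>] (0:ℝ)) (𝓝 (F x₀)) := by
    have h1 := hlim.const_mul (1 / K)
    have h2 : (1 / K) * (K * F x₀) = F x₀ := by field_simp
    rw [h2] at h1
    exact h1
  exact Tendsto.congr' heq hfinal
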